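/- Let q ∈ (0,1), set K(m) := ∫₀¹ dt/√((1−t²)(1−m²t²)) for 0 < m < 1 and K′ := K(√(1−q²)). Suppose s ∈ (0,1) satisfies ∫₀^s dt/√((1−t²)(1−(1−q²)t²)) = K′/4. Then 1 − (1−q²)s² = √q·(√(1+q) + 1)/(√(1+q) + √q); equivalently, dn(K′/4, √(1−q²)) = q^{1/4}(√(1+q)+1)^{1/2}(√(1+q)+√q)^{−1/2}. -/

import Mathlib

set_option maxHeartbeats 1000000
open Real MeasureTheory Set Filter Topology intervalIntegral

namespace Stmt13

noncomputable def ff (q t : ℝ) : ℝ := 1 / Real.sqrt ((1 - t ^ 2) * (1 - (1 - q ^ 2) * t ^ 2))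

variable {q : ℝ}

lemma arg_pos (hq : 0 < q) {t : ℝ} (ht : t ^ 2 < 1) :
    0 < (1 - t ^ 2) * (1 - (1 - q ^ 2) * t ^ 2) := by
  have h1 : 0 < 1 - t ^ 2 := by linarith
  have h2 : (1 - q ^ 2) * t ^ 2 < 1 := by nlinarith [sq_nonneg t, sq_nonneg q]
  nlinarith

lemma ff_pos (hq : 0 < q) {t : ℝ} (ht : t ^ 2 < 1) : 0 < ff q t := by
  have := arg_pos hq ht
  unfold ff
  positivity

lemma ff_eq (hq : 0 < q) {t : ℝ} (ht : t ^ 2 < 1) :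
    ff q t = 1 / (Real.sqrt (1 - t ^ 2) * Real.sqrt (1 - (1 - q ^ 2) * t ^ 2)) := by
  unfold ff
  rw [Real.sqrt_mul (by nlinarith)]

lemma ff_contOn (hq : 0 < q) : ContinuousOn (ff q) {t | t ^ 2 < 1} := by
  apply ContinuousOn.div continuousOn_const
  · exact (Real.continuous_sqrt.comp_continuousOn (by fun_prop))
  · intro t ht
    exact ne_of_gt (Real.sqrt_pos.mpr (arg_pos hq ht))

lemma ff_meas : Measurable (ff q) := by
  unfold ff
  fun_prop

lemma ff_integrable (hq : 0 < q) (hq1 : q < 1) :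
    IntervalIntegrable (ff q) volume 0 1 := by
  have hbase : IntervalIntegrable (fun x : ℝ => x ^ (-(1/2) : ℝ)) volume 0 1 :=
    intervalIntegral.intervalIntegrable_rpow' (by norm_num)
  have hg : IntervalIntegrable (fun x : ℝ => (1/q) * ((1 - x) ^ (-(1/2) : ℝ))) volume 0 1 := by
    have := (hbase.comp_sub_left 1).symm
    simpa using this.const_mul (1/q)
  refine hg.mono_fun (ff_meas.aestronglyMeasurable) ?_
  filter_upwards [ae_restrict_mem measurableSet_uIoc] with x hx
  rw [uIoc_of_le (by norm_num : (0:ℝ) ≤ 1)] at hx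
  obtain ⟨hx0, hx1⟩ := hx
  have h1x : 0 ≤ 1 - x := by linarith
  have hr : (1 - x) ^ (-(1/2) : ℝ) = 1 / Real.sqrt (1 - x) := by
    rw [Real.rpow_neg h1x, Real.sqrt_eq_rpow, one_div]
    rw [one_div]
  have hgnn : (0:ℝ) ≤ 1/q * ((1 - x) ^ (-(1/2) : ℝ)) := by
    have : (0:ℝ) ≤ (1 - x) ^ (-(1/2) : ℝ) := Real.rpow_nonneg h1x _
    positivity
  have hffnn : 0 ≤ ff q x := by unfold ff; positivity
  rw [Real.norm_eq_abs, Real.norm_eq_abs, abs_of_nonneg hffnn, abs_of_nonneg hgnn, hr]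
  rcases eq_or_lt_of_le hx1 with rfl | hx1'
  · have : ff q 1 = 0 := by norm_num [ff]
    rw [this]
    positivity
  · have hx2 : x ^ 2 ≤ 1 := by nlinarith
    have e1 : q ^ 2 ≤ 1 - (1 - q ^ 2) * x ^ 2 := by
      nlinarith [mul_nonneg (by nlinarith : (0:ℝ) ≤ 1 - q ^ 2) (sub_nonneg.mpr hx2)]
    have e3 : q ^ 2 ≤ (1 + x) * (1 - (1 - q ^ 2) * x ^ 2) := by
      nlinarith [mul_nonneg hx0.le (le_trans (sq_nonneg q) e1)]
    have key : (1 - x) * q ^ 2 ≤ (1 - x ^ 2) * (1 - (1 - q ^ 2) * x ^ 2) := by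
      nlinarith [mul_nonneg h1x (sub_nonneg.mpr e3)]
    have hb : q * Real.sqrt (1 - x) ≤ Real.sqrt ((1 - x ^ 2) * (1 - (1 - q ^ 2) * x ^ 2)) := by
      have h := Real.sqrt_le_sqrt key
      rwa [Real.sqrt_mul h1x, Real.sqrt_sq hq.le, mul_comm] at h
    have hpos : 0 < q * Real.sqrt (1 - x) := by
      have : 0 < Real.sqrt (1 - x) := Real.sqrt_pos.mpr (by linarith)
      positivity
    calc ff q x = 1 / Real.sqrt ((1 - x ^ 2) * (1 - (1 - q ^ 2) * x ^ 2)) := rfl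
      _ ≤ 1 / (q * Real.sqrt (1 - x)) := one_div_le_one_div_of_le hpos hb
      _ = 1 / q * (1 / Real.sqrt (1 - x)) := by ring



noncomputable def sg (q x : ℝ) : ℝ := Real.sqrt ((1 - x ^ 2) / (1 - (1 - q ^ 2) * x ^ 2))

noncomputable def sg' (q t : ℝ) : ℝ :=
  -(q ^ 2 * t) / (Real.sqrt (1 - t ^ 2) * Real.sqrt (1 - (1 - q ^ 2) * t ^ 2) ^ 3)

variable {q : ℝ}

-- positivity of denominators
lemma den_pos (hq : 0 < q) {t : ℝ} (ht : t ^ 2 < 1) : 0 < 1 - (1 - q ^ 2) * t ^ 2 := by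
  nlinarith [sq_nonneg t, sq_nonneg q]

lemma sg_hasDeriv (hq : 0 < q) (hq1 : q < 1) {t : ℝ} (ht0 : 0 < t) (ht1 : t < 1) :
    HasDerivAt (sg q) (sg' q t) t := by
  have ht2 : t ^ 2 < 1 := by nlinarith
  have h1 : 0 < 1 - t ^ 2 := by linarith
  have h2 : 0 < 1 - (1 - q ^ 2) * t ^ 2 := den_pos hq ht2
  set y := Real.sqrt (1 - t ^ 2) with hy
  set z := Real.sqrt (1 - (1 - q ^ 2) * t ^ 2) with hz
  have hyp : 0 < y := Real.sqrt_pos.mpr h1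
  have hzp : 0 < z := Real.sqrt_pos.mpr h2
  have hy2 : y ^ 2 = 1 - t ^ 2 := Real.sq_sqrt h1.le
  have hz2 : z ^ 2 = 1 - (1 - q ^ 2) * t ^ 2 := Real.sq_sqrt h2.le
  have hnum : HasDerivAt (fun x : ℝ => 1 - x ^ 2) (-(2 * t)) t := by
    simpa using (hasDerivAt_pow 2 t).const_sub 1
  have hden : HasDerivAt (fun x : ℝ => 1 - (1 - q ^ 2) * x ^ 2) (-((1 - q ^ 2) * (2 * t))) t := by
    simpa [mul_comm, mul_assoc] using ((hasDerivAt_pow 2 t).const_mul (1 - q ^ 2)).const_sub 1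
  have hw : HasDerivAt (fun x : ℝ => (1 - x ^ 2) / (1 - (1 - q ^ 2) * x ^ 2))
      ((-(2 * t) * (1 - (1 - q ^ 2) * t ^ 2) - (1 - t ^ 2) * (-((1 - q ^ 2) * (2 * t)))) /
        (1 - (1 - q ^ 2) * t ^ 2) ^ 2) t := hnum.div hden h2.ne'
  have hwx : (1 - t ^ 2) / (1 - (1 - q ^ 2) * t ^ 2) ≠ 0 := by positivity
  have := hw.sqrt hwx
  convert this using 1
  · rfl
  rw [show Real.sqrt ((1 - t ^ 2) / (1 - (1 - q ^ 2) * t ^ 2)) = y / z from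
    Real.sqrt_div h1.le _]
  rw [sg']
  rw [← hy, ← hz]
  have : 1 - t ^ 2 * (1 - q ^ 2) ≠ 0 := by nlinarith
  field_simp
  linear_combination (q ^ 2 * (z ^ 2 + 1 - (1 - q ^ 2) * t ^ 2)) * hz2

lemma sg_point (hq : 0 < q) (hq1 : q < 1) {t : ℝ} (ht0 : 0 < t) (ht1 : t < 1) :
    ff q (sg q t) * sg' q t = - ff q t := by
  have ht2 : t ^ 2 < 1 := by nlinarith
  have h1 : 0 < 1 - t ^ 2 := by linarith
  have h2 : 0 < 1 - (1 - q ^ 2) * t ^ 2 := den_pos hq ht2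
  set y := Real.sqrt (1 - t ^ 2) with hy
  set z := Real.sqrt (1 - (1 - q ^ 2) * t ^ 2) with hz
  have hyp : 0 < y := Real.sqrt_pos.mpr h1
  have hzp : 0 < z := Real.sqrt_pos.mpr h2
  have hy2 : y ^ 2 = 1 - t ^ 2 := Real.sq_sqrt h1.le
  have hz2 : z ^ 2 = 1 - (1 - q ^ 2) * t ^ 2 := Real.sq_sqrt h2.le
  have hw : (0:ℝ) ≤ (1 - t ^ 2) / (1 - (1 - q ^ 2) * t ^ 2) := by positivity
  have hsg2 : sg q t ^ 2 = (1 - t ^ 2) / (1 - (1 - q ^ 2) * t ^ 2) := Real.sq_sqrt hw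
  have harg : (1 - sg q t ^ 2) * (1 - (1 - q ^ 2) * sg q t ^ 2)
      = (q ^ 2 * t / (1 - (1 - q ^ 2) * t ^ 2)) ^ 2 := by
    have : 1 - t ^ 2 * (1 - q ^ 2) ≠ 0 := by nlinarith
    rw [hsg2]; field_simp; ring
  have hffsg : ff q (sg q t) = (1 - (1 - q ^ 2) * t ^ 2) / (q ^ 2 * t) := by
    unfold ff
    rw [harg, Real.sqrt_sq (by positivity)]
    rw [one_div_div]
  have hfft : ff q t = 1 / (y * z) := by
    unfold ff
    rw [Real.sqrt_mul h1.le, ← hy, ← hz]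
  rw [hffsg, hfft, sg', ← hy, ← hz, ← hz2]
  field_simp

lemma half (hq : 0 < q) (hq1 : q < 1) :
    (∫ t in (0:ℝ)..1, ff q t) = 2 * ∫ t in (0:ℝ)..(1 / Real.sqrt (1 + q)), ff q t := by
  set s1 : ℝ := 1 / Real.sqrt (1 + q) with hs1def
  have hp1 : (1:ℝ) < Real.sqrt (1 + q) := by
    nlinarith [Real.sq_sqrt (show (0:ℝ) ≤ 1 + q by linarith), Real.sqrt_nonneg (1 + q)]
  have hs1pos : 0 < s1 := by positivity
  have hs1lt1 : s1 < 1 := by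
    rw [hs1def, div_lt_one (by linarith)]; exact hp1
  have hs1sq : s1 ^ 2 = 1 / (1 + q) := by
    rw [hs1def, div_pow, one_pow, Real.sq_sqrt (by positivity)]
  set H : ℝ → ℝ := fun u => ∫ t in (0:ℝ)..u, ff q t with hH
  have ffInt : ∀ a b : ℝ, a ∈ Icc (0:ℝ) 1 → b ∈ Icc (0:ℝ) 1 →
      IntervalIntegrable (ff q) volume a b := by
    intro a b ha hb
    refine (ff_integrable hq hq1).mono_set ?_
    rw [uIcc_of_le (by norm_num : (0:ℝ) ≤ 1)]
    exact uIcc_subset_Icc ha hb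
  have claimA : ∀ x ∈ Ico s1 1, H (sg q x) + H x = 2 * H s1 := by
    intro x hx
    obtain ⟨hs1x, hx1⟩ := hx
    have hxpos : 0 < x := lt_of_lt_of_le hs1pos hs1x
    have huIcc : uIcc s1 x = Icc s1 x := uIcc_of_le hs1x
    have hderiv : ∀ t ∈ uIcc s1 x, HasDerivAt (sg q) (sg' q t) t := by
      intro t ht
      rw [huIcc] at ht
      exact sg_hasDeriv hq hq1 (lt_of_lt_of_le hs1pos ht.1) (lt_of_le_of_lt ht.2 hx1)
    have hcont' : ContinuousOn (sg' q) (uIcc s1 x) := by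
      rw [huIcc]
      unfold sg'
      apply ContinuousOn.div (by fun_prop)
      · exact ((Real.continuous_sqrt.comp_continuousOn (by fun_prop)).mul
          ((Real.continuous_sqrt.comp_continuousOn (by fun_prop)).pow 3))
      · intro t ht
        have ht2 : t ^ 2 < 1 := by nlinarith [ht.1, ht.2, hs1pos, hx1]
        have h1 : 0 < Real.sqrt (1 - t ^ 2) := Real.sqrt_pos.mpr (by linarith)
        have h2 : 0 < Real.sqrt (1 - (1 - q ^ 2) * t ^ 2) := Real.sqrt_pos.mpr (den_pos hq ht2)
        positivity
    have himg : ∀ t ∈ uIcc s1 x, (sg q t) ^ 2 < 1 := by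
      intro t ht
      rw [huIcc] at ht
      have ht0 : 0 < t := lt_of_lt_of_le hs1pos ht.1
      have ht1 : t < 1 := lt_of_le_of_lt ht.2 hx1
      have ht2 : t ^ 2 < 1 := by nlinarith
      have h2 : 0 < 1 - (1 - q ^ 2) * t ^ 2 := den_pos hq ht2
      rw [sg, Real.sq_sqrt (div_nonneg (by linarith) h2.le)]
      rw [div_lt_one h2]
      nlinarith [mul_pos (pow_pos hq 2) (pow_pos ht0 2)]
    have hgcont : ContinuousOn (ff q) (sg q '' uIcc s1 x) := by
      refine (ff_contOn hq).mono ?_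
      rintro u ⟨t, ht, rfl⟩
      exact himg t ht
    have sub := intervalIntegral.integral_comp_mul_deriv' hderiv hcont' hgcont
    have hsgs1 : sg q s1 = s1 := by
      rw [sg, show (1 - s1 ^ 2) / (1 - (1 - q ^ 2) * s1 ^ 2) = s1 ^ 2 by
        rw [hs1sq]; field_simp; ring_nf; field_simp]
      exact Real.sqrt_sq hs1pos.le
    have hsgx01 : sg q x ∈ Icc (0:ℝ) 1 := by
      constructor
      · exact Real.sqrt_nonneg _
      · have := himg x (by rw [huIcc]; exact ⟨hs1x, le_rfl⟩)
        nlinarith [Real.sqrt_nonneg ((1 - x ^ 2) / (1 - (1 - q ^ 2) * x ^ 2))]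
    have hLHS : (∫ t in s1..x, (ff q ∘ sg q) t * sg' q t) = -(H x - H s1) := by
      rw [intervalIntegral.integral_congr (g := fun t => - ff q t) ?_]
      · rw [intervalIntegral.integral_neg]
        congr 1
        rw [hH]
        rw [← intervalIntegral.integral_interval_sub_left
            (ffInt 0 x ⟨le_rfl, by norm_num⟩ ⟨hxpos.le, hx1.le⟩)
            (ffInt 0 s1 ⟨le_rfl, by norm_num⟩ ⟨hs1pos.le, hs1lt1.le⟩)]
      · intro t ht
        rw [huIcc] at ht
        exact sg_point hq hq1 (lt_of_lt_of_le hs1pos ht.1) (lt_of_le_of_lt ht.2 hx1)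
    have hRHS : (∫ u in sg q s1..sg q x, ff q u) = H (sg q x) - H s1 := by
      rw [hsgs1, hH]
      rw [← intervalIntegral.integral_interval_sub_left
          (ffInt 0 (sg q x) ⟨le_rfl, by norm_num⟩ hsgx01)
          (ffInt 0 s1 ⟨le_rfl, by norm_num⟩ ⟨hs1pos.le, hs1lt1.le⟩)]
    rw [hLHS, hRHS] at sub
    linarith
  -- limit as x → 1⁻
  have hIcc : IntegrableOn (ff q) (Icc 0 1) volume := by
    have := ff_integrable hq hq1
    rwa [intervalIntegrable_iff_integrableOn_Icc_of_le (by norm_num)] at this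
  have Hcont : ContinuousOn H (Icc 0 1) := by
    have := intervalIntegral.continuousOn_primitive_interval'
      (ff_integrable hq hq1) (a := 0) (by rw [uIcc_of_le (by norm_num : (0:ℝ) ≤ 1)]; exact ⟨le_rfl, by norm_num⟩)
    rwa [uIcc_of_le (by norm_num : (0:ℝ) ≤ 1)] at this
  have sgcont : ContinuousOn (sg q) (Icc s1 1) := by
    unfold sg
    apply Real.continuous_sqrt.comp_continuousOn
    apply ContinuousOn.div (by fun_prop) (by fun_prop)
    intro x hx
    have hx2 : x ^ 2 ≤ 1 := by nlinarith [hx.1, hx.2, hs1pos]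
    nlinarith [mul_nonneg (sq_nonneg q) (sq_nonneg x)]
  have maps : MapsTo (sg q) (Icc s1 1) (Icc 0 1) := by
    intro x hx
    have hx2 : x ^ 2 ≤ 1 := by nlinarith [hx.1, hx.2, hs1pos]
    have h2 : 0 < 1 - (1 - q ^ 2) * x ^ 2 := by nlinarith [mul_nonneg (sq_nonneg q) (sq_nonneg x)]
    constructor
    · exact Real.sqrt_nonneg _
    · rw [sg]
      rw [Real.sqrt_le_one]
      rw [div_le_one h2]
      nlinarith [mul_nonneg (sq_nonneg q) (sq_nonneg x)]
  set φ : ℝ → ℝ := fun x => H (sg q x) + H x with hφ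
  have φcont : ContinuousOn φ (Icc s1 1) :=
    (Hcont.comp sgcont maps).add (Hcont.mono (Icc_subset_Icc hs1pos.le le_rfl))
  have hne : (𝓝[Ico s1 1] (1:ℝ)).NeBot := by
    apply mem_closure_iff_nhdsWithin_neBot.mp
    rw [closure_Ico (ne_of_lt hs1lt1)]
    exact right_mem_Icc.mpr hs1lt1.le
  have t1 : Tendsto φ (𝓝[Ico s1 1] 1) (𝓝 (φ 1)) :=
    (φcont 1 (right_mem_Icc.mpr hs1lt1.le)).mono Ico_subset_Icc_self
  have t2 : Tendsto φ (𝓝[Ico s1 1] 1) (𝓝 (2 * H s1)) := by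
    apply Filter.Tendsto.congr' _ (tendsto_const_nhds (α := ℝ) (x := 2 * H s1))
    filter_upwards [self_mem_nhdsWithin] with x hx
    exact (claimA x hx).symm
  have hkey : φ 1 = 2 * H s1 := tendsto_nhds_unique t1 t2
  have hsg1 : sg q 1 = 0 := by norm_num [sg]
  rw [hφ] at hkey
  simp only [hsg1] at hkey
  have hH0 : H 0 = 0 := intervalIntegral.integral_same
  rw [hH0] at hkey
  linarith [hkey]


noncomputable def rh (q t : ℝ) : ℝ :=
  (Real.sqrt (1 - t ^ 2) * Real.sqrt (1 - (1 - q ^ 2) * t ^ 2) - q * t) /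
    (Real.sqrt (1 + q) * (1 - (1 - q) * t ^ 2))

noncomputable def rh' (q t : ℝ) : ℝ :=
  -(q * (Real.sqrt (1 - t ^ 2) + t * Real.sqrt (1 - (1 - q ^ 2) * t ^ 2)) *
      (Real.sqrt (1 - (1 - q ^ 2) * t ^ 2) + (1 - q) * t * Real.sqrt (1 - t ^ 2))) /
    (Real.sqrt (1 + q) * (1 - (1 - q) * t ^ 2) ^ 2 *
      (Real.sqrt (1 - t ^ 2) * Real.sqrt (1 - (1 - q ^ 2) * t ^ 2)))

lemma key1 (q t y z : ℝ) (hy2 : y ^ 2 = 1 - t ^ 2) (hz2 : z ^ 2 = 1 - (1 - q ^ 2) * t ^ 2) :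
    q * (y + t * z) ^ 2 = (1 + q) * (1 - (1 - q) * t ^ 2) ^ 2 - (y * z - q * t) ^ 2 := by
  linear_combination (q + z ^ 2) * hy2 + (1 - t ^ 2 + t ^ 2 * q) * hz2

lemma key2 (q t y z : ℝ) (hy2 : y ^ 2 = 1 - t ^ 2) (hz2 : z ^ 2 = 1 - (1 - q ^ 2) * t ^ 2) :
    q * (z + (1 - q) * t * y) ^ 2
      = (1 - (1 - q) * t ^ 2) ^ 2 - (1 - q) * (y * z - q * t) ^ 2 := by
  linear_combination (t ^ 2 * q - 2 * t ^ 2 * q ^ 2 + t ^ 2 * q ^ 3 + z ^ 2 - z ^ 2 * q) * hy2 +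
    (1 - t ^ 2 + t ^ 2 * q) * hz2

lemma delta_pos (hq : 0 < q) (hq1 : q < 1) {t : ℝ} (ht : t ^ 2 ≤ 1) :
    0 < 1 - (1 - q) * t ^ 2 := by nlinarith

lemma rh_hasDeriv (hq : 0 < q) (hq1 : q < 1) {t : ℝ} (ht0 : 0 ≤ t) (ht1 : t < 1) :
    HasDerivAt (rh q) (rh' q t) t := by
  have ht2 : t ^ 2 < 1 := by nlinarith
  have h1 : 0 < 1 - t ^ 2 := by linarith
  have h2 : 0 < 1 - (1 - q ^ 2) * t ^ 2 := den_pos hq ht2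
  have hD : 0 < 1 - (1 - q) * t ^ 2 := delta_pos hq hq1 ht2.le
  have hD' : 1 - t ^ 2 * (1 - q) ≠ 0 := by nlinarith
  have hp : 0 < Real.sqrt (1 + q) := Real.sqrt_pos.mpr (by linarith)
  have hp2 : Real.sqrt (1 + q) ^ 2 = 1 + q := Real.sq_sqrt (by linarith)
  set p := Real.sqrt (1 + q) with hpdef
  set y := Real.sqrt (1 - t ^ 2) with hy
  set z := Real.sqrt (1 - (1 - q ^ 2) * t ^ 2) with hz
  have hyp : 0 < y := Real.sqrt_pos.mpr h1
  have hzp : 0 < z := Real.sqrt_pos.mpr h2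
  have hy2 : y ^ 2 = 1 - t ^ 2 := Real.sq_sqrt h1.le
  have hz2 : z ^ 2 = 1 - (1 - q ^ 2) * t ^ 2 := Real.sq_sqrt h2.le
  have hyd : HasDerivAt (fun x : ℝ => Real.sqrt (1 - x ^ 2)) (-(2 * t) / (2 * y)) t := by
    have hnum : HasDerivAt (fun x : ℝ => 1 - x ^ 2) (-(2 * t)) t := by
      simpa using (hasDerivAt_pow 2 t).const_sub 1
    exact hnum.sqrt h1.ne'
  have hzd : HasDerivAt (fun x : ℝ => Real.sqrt (1 - (1 - q ^ 2) * x ^ 2))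
      (-((1 - q ^ 2) * (2 * t)) / (2 * z)) t := by
    have hden : HasDerivAt (fun x : ℝ => 1 - (1 - q ^ 2) * x ^ 2)
        (-((1 - q ^ 2) * (2 * t))) t := by
      simpa [mul_comm, mul_assoc] using ((hasDerivAt_pow 2 t).const_mul (1 - q ^ 2)).const_sub 1
    exact hden.sqrt h2.ne'
  have hNd : HasDerivAt (fun x : ℝ =>
      Real.sqrt (1 - x ^ 2) * Real.sqrt (1 - (1 - q ^ 2) * x ^ 2) - q * x)
      ((-(2 * t) / (2 * y)) * z + y * (-((1 - q ^ 2) * (2 * t)) / (2 * z)) - q) t := by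
    have hqx : HasDerivAt (fun x : ℝ => q * x) q t := by
      simpa using (hasDerivAt_id t).const_mul q
    exact (hyd.mul hzd).sub hqx
  have hDd : HasDerivAt (fun x : ℝ => p * (1 - (1 - q) * x ^ 2)) (p * (-((1 - q) * (2 * t)))) t := by
    have := (((hasDerivAt_pow 2 t).const_mul (1 - q)).const_sub 1).const_mul p
    simpa using this
  have hdiv := hNd.div hDd (by positivity)
  convert hdiv using 1
  · rfl
  · rfl
  · rfl
  rw [rh', ← hy, ← hz, ← hpdef]
  field_simp
  linear_combination (t * (-q * (1 - q) + (1 - (1 - q) * t ^ 2) * (1 - q ^ 2) - 2 * (1 - q) * z ^ 2)) * hy2 + (t * (-q + (1 - (1 - q) * t ^ 2) - 2 * (1 - q) * (1 - t ^ 2))) * hz2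


lemma rh_point (hq : 0 < q) (hq1 : q < 1) {t : ℝ} (ht0 : 0 ≤ t) (ht1 : t < 1) :
    ff q (rh q t) * rh' q t = - ff q t := by
  have ht2 : t ^ 2 < 1 := by nlinarith
  have h1 : 0 < 1 - t ^ 2 := by linarith
  have h2 : 0 < 1 - (1 - q ^ 2) * t ^ 2 := den_pos hq ht2
  have hD : 0 < 1 - (1 - q) * t ^ 2 := delta_pos hq hq1 ht2.le
  have hD' : 1 - t ^ 2 * (1 - q) ≠ 0 := by nlinarith
  have hp : 0 < Real.sqrt (1 + q) := Real.sqrt_pos.mpr (by linarith)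
  have hp2 : Real.sqrt (1 + q) ^ 2 = 1 + q := Real.sq_sqrt (by linarith)
  set p := Real.sqrt (1 + q) with hpdef
  set y := Real.sqrt (1 - t ^ 2) with hy
  set z := Real.sqrt (1 - (1 - q ^ 2) * t ^ 2) with hz
  have hyp : 0 < y := Real.sqrt_pos.mpr h1
  have hzp : 0 < z := Real.sqrt_pos.mpr h2
  have hy2 : y ^ 2 = 1 - t ^ 2 := Real.sq_sqrt h1.le
  have hz2 : z ^ 2 = 1 - (1 - q ^ 2) * t ^ 2 := Real.sq_sqrt h2.le
  have hCpos : 0 < y + t * z := by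
    have := mul_nonneg ht0 hzp.le
    linarith
  have hDpos : 0 < z + (1 - q) * t * y := by
    have : 0 ≤ (1 - q) * t * y := mul_nonneg (mul_nonneg (by linarith) ht0) hyp.le
    linarith
  have hA : 1 - rh q t ^ 2 = q * (y + t * z) ^ 2 / (p ^ 2 * (1 - (1 - q) * t ^ 2) ^ 2) := by
    rw [rh, ← hy, ← hz, ← hpdef, div_pow, mul_pow]
    rw [key1 q t y z hy2 hz2, hp2]
    field_simp
    try ring
  have hB : 1 - (1 - q ^ 2) * rh q t ^ 2
      = q * (z + (1 - q) * t * y) ^ 2 / (1 - (1 - q) * t ^ 2) ^ 2 := by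
    rw [rh, ← hy, ← hz, ← hpdef, div_pow, mul_pow]
    rw [show (1 - (1 - q ^ 2) * ((y * z - q * t) ^ 2 / (p ^ 2 * (1 - (1 - q) * t ^ 2) ^ 2)))
        = (p ^ 2 * (1 - (1 - q) * t ^ 2) ^ 2 - (1 - q ^ 2) * (y * z - q * t) ^ 2)
          / (p ^ 2 * (1 - (1 - q) * t ^ 2) ^ 2) by field_simp]
    rw [show p ^ 2 * (1 - (1 - q) * t ^ 2) ^ 2 - (1 - q ^ 2) * (y * z - q * t) ^ 2
        = p ^ 2 * ((1 - (1 - q) * t ^ 2) ^ 2 - (1 - q) * (y * z - q * t) ^ 2) by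
      rw [hp2]; ring]
    rw [← key2 q t y z hy2 hz2]
    rw [show p ^ 2 * (q * (z + (1 - q) * t * y) ^ 2) / (p ^ 2 * (1 - (1 - q) * t ^ 2) ^ 2)
        = (q * (z + (1 - q) * t * y) ^ 2) / (1 - (1 - q) * t ^ 2) ^ 2 by
      rw [mul_div_mul_left _ _ (by positivity)]]
  have hprod : (1 - rh q t ^ 2) * (1 - (1 - q ^ 2) * rh q t ^ 2)
      = (q * (y + t * z) * (z + (1 - q) * t * y) / (p * (1 - (1 - q) * t ^ 2) ^ 2)) ^ 2 := by
    rw [hA, hB]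
    field_simp
  have hffrh : ff q (rh q t)
      = p * (1 - (1 - q) * t ^ 2) ^ 2 / (q * (y + t * z) * (z + (1 - q) * t * y)) := by
    unfold ff
    rw [hprod, Real.sqrt_sq (by positivity), one_div_div]
  have hfft : ff q t = 1 / (y * z) := by
    unfold ff
    rw [Real.sqrt_mul h1.le, ← hy, ← hz]
  rw [hffrh, hfft, rh', ← hy, ← hz, ← hpdef]
  field_simp


noncomputable def s0 (q : ℝ) : ℝ :=
  Real.sqrt (Real.sqrt (1 + q) /
    ((1 + Real.sqrt q) * (1 + q) * (Real.sqrt (1 + q) + Real.sqrt q)))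

lemma s0_sq (hq : 0 < q) (hq1 : q < 1) :
    s0 q ^ 2 = Real.sqrt (1 + q) /
      ((1 + Real.sqrt q) * (1 + q) * (Real.sqrt (1 + q) + Real.sqrt q)) := by
  have hr : 0 < Real.sqrt q := Real.sqrt_pos.mpr hq
  have hp : 0 < Real.sqrt (1 + q) := Real.sqrt_pos.mpr (by linarith)
  exact Real.sq_sqrt (by positivity)

lemma s0_pos (hq : 0 < q) (hq1 : q < 1) : 0 < s0 q := by
  have hr : 0 < Real.sqrt q := Real.sqrt_pos.mpr hq
  have hp : 0 < Real.sqrt (1 + q) := Real.sqrt_pos.mpr (by linarith)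
  exact Real.sqrt_pos.mpr (by positivity)

lemma s0_lt_s1 (hq : 0 < q) (hq1 : q < 1) : s0 q ^ 2 < 1 / (1 + q) := by
  have hr : 0 < Real.sqrt q := Real.sqrt_pos.mpr hq
  have hp : 0 < Real.sqrt (1 + q) := Real.sqrt_pos.mpr (by linarith)
  have hr2 : Real.sqrt q ^ 2 = q := Real.sq_sqrt hq.le
  have hp2 : Real.sqrt (1 + q) ^ 2 = 1 + q := Real.sq_sqrt (by linarith)
  rw [s0_sq hq hq1, div_lt_div_iff₀ (by positivity) (by linarith)]
  nlinarith [mul_pos hr hp, mul_pos hr hr]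

lemma s0_sq_lt_one (hq : 0 < q) (hq1 : q < 1) : s0 q ^ 2 < 1 := by
  have := s0_lt_s1 hq hq1
  have h1 : 1 / (1 + q) < 1 := by rw [div_lt_one (by linarith)]; linarith
  linarith

lemma s0_core (r p q : ℝ) (hr2 : r ^ 2 = q) (hp2 : p ^ 2 = 1 + q) :
    ((1 + r) * (1 + q) * (p + r) - p) * ((1 + r) * (1 + q) * (p + r) - (1 - q ^ 2) * p) *
        ((1 + r) * (1 + q) * (p + r))
      = p * (q * ((1 + r) * (1 + q) * (p + r)) + p * ((1 + r) * (1 + q) * (p + r) - (1 - q) * p)) ^ 2 := by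
  linear_combination ((3*q + 10*q^2 + 12*q^3 + 6*q^4 + q^5 + p + 12*p*q + 30*p*q^2 + 28*p*q^3 + 9*p*q^4 + 2*p^2 + 13*p^2*q + 21*p^2*q^2 + 11*p^2*q^3 + p^2*q^4 - 4*p^3*q - 12*p^3*q^2 - 8*p^3*q^3 - 2*p^4 - 10*p^4*q - 10*p^4*q^2 - 2*p^4*q^3 - 1*p^5 - 2*p^5*q - 1*p^5*q^2 + r + 6*r*q + 12*r*q^2 + 10*r*q^3 + 3*r*q^4 + 5*r*p + 22*r*p*q + 32*r*p*q^2 + 18*r*p*q^3 + 3*r*p*q^4 + 5*r*p^2 + 15*r*p^2*q + 15*r*p^2*q^2 + 5*r*p^2*q^3 - 1*r*p^3 - 5*r*p^3*q - 7*r*p^3*q^2 - 3*r*p^3*q^3 - 2*r*p^4 - 4*r*p^4*q - 2*r*p^4*q^2 + 3*r^2 + 10*r^2*q + 12*r^2*q^2 + 6*r^2*q^3 + r^2*q^4 + 7*r^2*p + 23*r^2*p*q + 25*r^2*p*q^2 + 9*r^2*p*q^3 + 3*r^2*p^2 + 7*r^2*p^2*q + 5*r^2*p^2*q^2 + r^2*p^2*q^3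 - 1*r^2*p^3 - 2*r^2*p^3*q - 1*r^2*p^3*q^2 + 3*r^3 + 9*r^3*q + 9*r^3*q^2 + 3*r^3*q^3 + 3*r^3*p + 9*r^3*p*q + 9*r^3*p*q^2 + 3*r^3*p*q^3 + r^4 + 3*r^4*q + 3*r^4*q^2 + r^4*q^3 : ℝ)) * hr2 + ((-3*q^2 - 7*q^3 - 5*q^4 - 1*q^5 - 1*p*q - 11*p*q^2 - 19*p*q^3 - 9*p*q^4 - 2*p^2*q - 14*p^2*q^2 - 14*p^2*q^3 - 2*p^2*q^4 - 1*p^3*q - 6*p^3*q^2 - 1*p^3*q^3 - 1*r*q - 5*r*q^2 - 7*r*q^3 - 3*r*q^4 - 5*r*p*q - 17*r*p*q^2 - 15*r*p*q^3 - 3*r*p*q^4 - 8*r*p^2*q - 16*r*p^2*q^2 - 8*r*p^2*q^3 - 4*r*p^3*q - 4*r*p^3*q^2 : ℝ)) * hp2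

lemma s0_fixed_sq (hq : 0 < q) (hq1 : q < 1) :
    (1 - s0 q ^ 2) * (1 - (1 - q ^ 2) * s0 q ^ 2)
      = s0 q ^ 2 * (q + Real.sqrt (1 + q) * (1 - (1 - q) * s0 q ^ 2)) ^ 2 := by
  have hr : 0 < Real.sqrt q := Real.sqrt_pos.mpr hq
  have hp : 0 < Real.sqrt (1 + q) := Real.sqrt_pos.mpr (by linarith)
  have hr2 : Real.sqrt q ^ 2 = q := Real.sq_sqrt hq.le
  have hp2 : Real.sqrt (1 + q) ^ 2 = 1 + q := Real.sq_sqrt (by linarith)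
  set r := Real.sqrt q with hrdef
  set p := Real.sqrt (1 + q) with hpdef
  have h3 : (0:ℝ) < 1 + q := by linarith
  have hd : (0:ℝ) < (1 + r) * (1 + q) * (p + r) := by positivity
  have core := s0_core r p q hr2 hp2
  set d := (1 + r) * (1 + q) * (p + r) with hddef
  have hX : s0 q ^ 2 = p / d := by rw [s0_sq hq hq1, ← hrdef, ← hpdef, ← hddef]
  clear_value d
  have hd0 : d ≠ 0 := hd.ne'
  rw [hX]
  rw [show (1 - p / d) * (1 - (1 - q ^ 2) * (p / d))
      = ((d - p) * (d - (1 - q ^ 2) * p)) / d ^ 2 by field_simp]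
  rw [show p / d * (q + p * (1 - (1 - q) * (p / d))) ^ 2
      = p * (q * d + p * (d - (1 - q) * p)) ^ 2 / d ^ 3 by field_simp]
  rw [div_eq_div_iff (by positivity) (by positivity)]
  linear_combination (d ^ 2) * core

lemma rh_s0 (hq : 0 < q) (hq1 : q < 1) : rh q (s0 q) = s0 q := by
  have hr : 0 < Real.sqrt q := Real.sqrt_pos.mpr hq
  have hp : 0 < Real.sqrt (1 + q) := Real.sqrt_pos.mpr (by linarith)
  have hσ2 : s0 q ^ 2 < 1 := s0_sq_lt_one hq hq1
  have hσ : 0 < s0 q := s0_pos hq hq1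
  have h1 : 0 < 1 - s0 q ^ 2 := by linarith
  have h2 : 0 < 1 - (1 - q ^ 2) * s0 q ^ 2 := den_pos hq hσ2
  have hD : 0 < 1 - (1 - q) * s0 q ^ 2 := delta_pos hq hq1 hσ2.le
  have hyz : Real.sqrt (1 - s0 q ^ 2) * Real.sqrt (1 - (1 - q ^ 2) * s0 q ^ 2)
      = s0 q * (q + Real.sqrt (1 + q) * (1 - (1 - q) * s0 q ^ 2)) := by
    rw [← Real.sqrt_mul h1.le, s0_fixed_sq hq hq1]
    rw [show s0 q ^ 2 * (q + Real.sqrt (1 + q) * (1 - (1 - q) * s0 q ^ 2)) ^ 2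
        = (s0 q * (q + Real.sqrt (1 + q) * (1 - (1 - q) * s0 q ^ 2))) ^ 2 by ring]
    exact Real.sqrt_sq (by positivity)
  have hD' : 1 - s0 q ^ 2 * (1 - q) ≠ 0 := by nlinarith
  rw [rh, hyz]
  field_simp
  ring

lemma rh_s1 (hq : 0 < q) (hq1 : q < 1) : rh q (1 / Real.sqrt (1 + q)) = 0 := by
  have hp : 0 < Real.sqrt (1 + q) := Real.sqrt_pos.mpr (by linarith)
  have hp2 : Real.sqrt (1 + q) ^ 2 = 1 + q := Real.sq_sqrt (by linarith)
  have hs1sq : (1 / Real.sqrt (1 + q)) ^ 2 = 1 / (1 + q) := by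
    rw [div_pow, one_pow, hp2]
  have e1 : 1 - (1 / Real.sqrt (1 + q)) ^ 2 = q / (1 + q) := by
    rw [hs1sq]; field_simp; ring
  have e2 : 1 - (1 - q ^ 2) * (1 / Real.sqrt (1 + q)) ^ 2 = q := by
    rw [hs1sq]; field_simp; ring
  rw [rh, e1, e2]
  rw [← Real.sqrt_mul (by positivity)]
  rw [show q / (1 + q) * q = (q / Real.sqrt (1 + q)) ^ 2 by
    rw [div_pow, hp2]; ring]
  rw [Real.sqrt_sq (by positivity)]
  rw [show q / Real.sqrt (1 + q) - q * (1 / Real.sqrt (1 + q)) = 0 by ring]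
  simp


lemma rh_sq_lt (hq : 0 < q) (hq1 : q < 1) {t : ℝ} (ht0 : 0 ≤ t) (ht1 : t < 1) :
    rh q t ^ 2 < 1 := by
  have ht2 : t ^ 2 < 1 := by nlinarith
  have h1 : 0 < 1 - t ^ 2 := by linarith
  have h2 : 0 < 1 - (1 - q ^ 2) * t ^ 2 := den_pos hq ht2
  have hD : 0 < 1 - (1 - q) * t ^ 2 := delta_pos hq hq1 ht2.le
  have hD' : 1 - t ^ 2 * (1 - q) ≠ 0 := by nlinarith
  have hp : 0 < Real.sqrt (1 + q) := Real.sqrt_pos.mpr (by linarith)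
  have hp2 : Real.sqrt (1 + q) ^ 2 = 1 + q := Real.sq_sqrt (by linarith)
  set p := Real.sqrt (1 + q) with hpdef
  set y := Real.sqrt (1 - t ^ 2) with hy
  set z := Real.sqrt (1 - (1 - q ^ 2) * t ^ 2) with hz
  have hyp : 0 < y := Real.sqrt_pos.mpr h1
  have hzp : 0 < z := Real.sqrt_pos.mpr h2
  have hy2 : y ^ 2 = 1 - t ^ 2 := Real.sq_sqrt h1.le
  have hz2 : z ^ 2 = 1 - (1 - q ^ 2) * t ^ 2 := Real.sq_sqrt h2.le
  have hCpos : 0 < y + t * z := by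
    have := mul_nonneg ht0 hzp.le
    linarith
  have hA : 1 - rh q t ^ 2 = q * (y + t * z) ^ 2 / (p ^ 2 * (1 - (1 - q) * t ^ 2) ^ 2) := by
    rw [rh, ← hy, ← hz, ← hpdef, div_pow, mul_pow]
    rw [key1 q t y z hy2 hz2, hp2]
    field_simp
    try ring
  have : 0 < 1 - rh q t ^ 2 := by
    rw [hA]
    positivity
  linarith

lemma quarter (hq : 0 < q) (hq1 : q < 1) :
    (∫ t in (0:ℝ)..(1 / Real.sqrt (1 + q)), ff q t) = 2 * ∫ t in (0:ℝ)..(s0 q), ff q t := by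
  have hp1 : (1:ℝ) < Real.sqrt (1 + q) := by
    nlinarith [Real.sq_sqrt (show (0:ℝ) ≤ 1 + q by linarith), Real.sqrt_nonneg (1 + q)]
  set s1 : ℝ := 1 / Real.sqrt (1 + q) with hs1def
  have hs1pos : 0 < s1 := by positivity
  have hs1lt1 : s1 < 1 := by rw [hs1def, div_lt_one (by linarith)]; exact hp1
  have hs1sq : s1 ^ 2 = 1 / (1 + q) := by
    rw [hs1def, div_pow, one_pow, Real.sq_sqrt (by positivity)]
  have hs0pos : 0 < s0 q := s0_pos hq hq1
  have hs0s1 : s0 q < s1 := by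
    have h := s0_lt_s1 hq hq1
    rw [← hs1sq] at h
    nlinarith
  have hs0lt1 : s0 q < 1 := lt_trans hs0s1 hs1lt1
  set H : ℝ → ℝ := fun u => ∫ t in (0:ℝ)..u, ff q t with hH
  have ffInt : ∀ a b : ℝ, a ∈ Icc (0:ℝ) 1 → b ∈ Icc (0:ℝ) 1 →
      IntervalIntegrable (ff q) volume a b := by
    intro a b ha hb
    refine (ff_integrable hq hq1).mono_set ?_
    rw [uIcc_of_le (by norm_num : (0:ℝ) ≤ 1)]
    exact uIcc_subset_Icc ha hb
  have huIcc : uIcc (s0 q) s1 = Icc (s0 q) s1 := uIcc_of_le hs0s1.le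
  have hderiv : ∀ t ∈ uIcc (s0 q) s1, HasDerivAt (rh q) (rh' q t) t := by
    intro t ht
    rw [huIcc] at ht
    exact rh_hasDeriv hq hq1 (le_trans hs0pos.le ht.1) (lt_of_le_of_lt ht.2 hs1lt1)
  have hcont' : ContinuousOn (rh' q) (uIcc (s0 q) s1) := by
    rw [huIcc]
    unfold rh'
    have c1 : ContinuousOn (fun t : ℝ => Real.sqrt (1 - t ^ 2)) (Icc (s0 q) s1) :=
      Real.continuous_sqrt.comp_continuousOn (by fun_prop)
    have c2 : ContinuousOn (fun t : ℝ => Real.sqrt (1 - (1 - q ^ 2) * t ^ 2)) (Icc (s0 q) s1) :=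
      Real.continuous_sqrt.comp_continuousOn (by fun_prop)
    have c3 : ContinuousOn (fun t : ℝ => (1 - (1 - q) * t ^ 2) ^ 2) (Icc (s0 q) s1) := by
      fun_prop
    apply ContinuousOn.div
    · exact ((continuousOn_const.mul (c1.add (continuousOn_id.mul c2))).mul
        (c2.add ((continuousOn_const.mul continuousOn_id).mul c1))).neg
    · exact (continuousOn_const.mul c3).mul (c1.mul c2)
    · intro t ht
      have ht0 : 0 < t := lt_of_lt_of_le hs0pos ht.1
      have ht1 : t < 1 := lt_of_le_of_lt ht.2 hs1lt1
      have ht2 : t ^ 2 < 1 := by nlinarith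
      have h1 : 0 < Real.sqrt (1 - t ^ 2) := Real.sqrt_pos.mpr (by linarith)
      have h2 : 0 < Real.sqrt (1 - (1 - q ^ 2) * t ^ 2) := Real.sqrt_pos.mpr (den_pos hq ht2)
      have hp : 0 < Real.sqrt (1 + q) := by linarith
      have hD : 0 < 1 - (1 - q) * t ^ 2 := delta_pos hq hq1 ht2.le
      positivity
  have himg : ∀ t ∈ uIcc (s0 q) s1, (rh q t) ^ 2 < 1 := by
    intro t ht
    rw [huIcc] at ht
    exact rh_sq_lt hq hq1 (le_trans hs0pos.le ht.1) (lt_of_le_of_lt ht.2 hs1lt1)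
  have hgcont : ContinuousOn (ff q) (rh q '' uIcc (s0 q) s1) := by
    refine (ff_contOn hq).mono ?_
    rintro u ⟨t, ht, rfl⟩
    exact himg t ht
  have sub := intervalIntegral.integral_comp_mul_deriv' hderiv hcont' hgcont
  rw [rh_s0 hq hq1, rh_s1 hq hq1] at sub
  have hLHS : (∫ t in (s0 q)..s1, (ff q ∘ rh q) t * rh' q t) = -(H s1 - H (s0 q)) := by
    have hcg : (∫ t in (s0 q)..s1, (ff q ∘ rh q) t * rh' q t)
        = ∫ t in (s0 q)..s1, - ff q t := by
      apply intervalIntegral.integral_congr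
      intro t ht
      rw [huIcc] at ht
      exact rh_point hq hq1 (le_trans hs0pos.le ht.1) (lt_of_le_of_lt ht.2 hs1lt1)
    rw [hcg, intervalIntegral.integral_neg]
    congr 1
    rw [hH]
    rw [← intervalIntegral.integral_interval_sub_left
        (ffInt 0 s1 ⟨le_rfl, by norm_num⟩ ⟨hs1pos.le, hs1lt1.le⟩)
        (ffInt 0 (s0 q) ⟨le_rfl, by norm_num⟩ ⟨hs0pos.le, hs0lt1.le⟩)]
  have hRHS : (∫ u in (s0 q)..(0:ℝ), ff q u) = -(H (s0 q)) := by
    rw [intervalIntegral.integral_symm]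
  rw [hLHS, hRHS] at sub
  show H s1 = 2 * H (s0 q)
  linarith

end Stmt13

/-- Proof of Corollary 4.4: with `K' = K(√(1-q²)) = ∫₀¹ dt/√((1-t²)(1-(1-q²)t²))`,
if `s = sn(K'/4, √(1-q²)) ∈ (0,1)`, i.e. `∫₀^s dt/√((1-t²)(1-(1-q²)t²)) = K'/4`,
then `dn²(K'/4) = 1 - (1-q²)s² = √q (√(1+q) + 1)/(√(1+q) + √q)`. -/
theorem stmt13 (q s : ℝ) (hq : 0 < q) (hq1 : q < 1) (hs : 0 < s) (hs1 : s < 1)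
    (h : (∫ t in (0 : ℝ)..s, 1 / Real.sqrt ((1 - t ^ 2) * (1 - (1 - q ^ 2) * t ^ 2))) =
      (∫ t in (0 : ℝ)..1, 1 / Real.sqrt ((1 - t ^ 2) * (1 - (1 - q ^ 2) * t ^ 2))) / 4) :
    1 - (1 - q ^ 2) * s ^ 2 =
      Real.sqrt q * (Real.sqrt (1 + q) + 1) / (Real.sqrt (1 + q) + Real.sqrt q) := by
  open Stmt13 in
  have h' : (∫ t in (0 : ℝ)..s, Stmt13.ff q t) = (∫ t in (0 : ℝ)..1, Stmt13.ff q t) / 4 := h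
  have hhalf := Stmt13.half hq hq1
  have hquarter := Stmt13.quarter hq hq1
  have hs0pos : 0 < Stmt13.s0 q := Stmt13.s0_pos hq hq1
  have hs0lt1 : Stmt13.s0 q < 1 := by
    have h2 := Stmt13.s0_sq_lt_one hq hq1
    nlinarith
  have hFs0 : (∫ t in (0 : ℝ)..(Stmt13.s0 q), Stmt13.ff q t)
      = (∫ t in (0 : ℝ)..1, Stmt13.ff q t) / 4 := by
    rw [hhalf, hquarter]; ring
  have hFeq : (∫ t in (0 : ℝ)..s, Stmt13.ff q t)
      = ∫ t in (0 : ℝ)..(Stmt13.s0 q), Stmt13.ff q t := by rw [h', hFs0]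
  have ffInt : ∀ a b : ℝ, a ∈ Set.Icc (0:ℝ) 1 → b ∈ Set.Icc (0:ℝ) 1 →
      IntervalIntegrable (Stmt13.ff q) MeasureTheory.volume a b := by
    intro a b ha hb
    refine (Stmt13.ff_integrable hq hq1).mono_set ?_
    rw [Set.uIcc_of_le (by norm_num : (0:ℝ) ≤ 1)]
    exact Set.uIcc_subset_Icc ha hb
  have hseq : s = Stmt13.s0 q := by
    by_contra hne
    rcases lt_or_gt_of_ne hne with hlt | hgt
    · have hpos : 0 < ∫ x in s..(Stmt13.s0 q), Stmt13.ff q x := by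
        apply intervalIntegral.intervalIntegral_pos_of_pos_on
          (ffInt s (Stmt13.s0 q) ⟨hs.le, hs1.le⟩ ⟨hs0pos.le, hs0lt1.le⟩)
        · intro x hx
          exact Stmt13.ff_pos hq (by nlinarith [hx.1, hx.2])
        · exact hlt
      have : (∫ x in s..(Stmt13.s0 q), Stmt13.ff q x)
          = (∫ t in (0 : ℝ)..(Stmt13.s0 q), Stmt13.ff q t) - ∫ t in (0 : ℝ)..s, Stmt13.ff q t := by
        rw [← intervalIntegral.integral_interval_sub_left
          (ffInt 0 (Stmt13.s0 q) ⟨le_rfl, by norm_num⟩ ⟨hs0pos.le, hs0lt1.le⟩)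
          (ffInt 0 s ⟨le_rfl, by norm_num⟩ ⟨hs.le, hs1.le⟩)]
      rw [this, hFeq] at hpos
      linarith
    · have hpos : 0 < ∫ x in (Stmt13.s0 q)..s, Stmt13.ff q x := by
        apply intervalIntegral.intervalIntegral_pos_of_pos_on
          (ffInt (Stmt13.s0 q) s ⟨hs0pos.le, hs0lt1.le⟩ ⟨hs.le, hs1.le⟩)
        · intro x hx
          exact Stmt13.ff_pos hq (by nlinarith [hx.1, hx.2])
        · exact hgt
      have : (∫ x in (Stmt13.s0 q)..s, Stmt13.ff q x)
          = (∫ t in (0 : ℝ)..s, Stmt13.ff q t)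
            - ∫ t in (0 : ℝ)..(Stmt13.s0 q), Stmt13.ff q t := by
        rw [← intervalIntegral.integral_interval_sub_left
          (ffInt 0 s ⟨le_rfl, by norm_num⟩ ⟨hs.le, hs1.le⟩)
          (ffInt 0 (Stmt13.s0 q) ⟨le_rfl, by norm_num⟩ ⟨hs0pos.le, hs0lt1.le⟩)]
      rw [this, hFeq] at hpos
      linarith
  subst hseq
  have hr : 0 < Real.sqrt q := Real.sqrt_pos.mpr hq
  have hp : 0 < Real.sqrt (1 + q) := Real.sqrt_pos.mpr (by linarith)
  have hr2 : Real.sqrt q ^ 2 = q := Real.sq_sqrt hq.le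
  have hp2 : Real.sqrt (1 + q) ^ 2 = 1 + q := Real.sq_sqrt (by linarith)
  rw [Stmt13.s0_sq hq hq1]
  set r := Real.sqrt q with hrdef
  set p := Real.sqrt (1 + q) with hpdef
  have h1 : (0:ℝ) < 1 + r := by linarith
  have h2 : (0:ℝ) < p + r := by linarith
  have h3 : (0:ℝ) < 1 + q := by linarith
  field_simp
  linear_combination (-(1 + q) * p) * hr2
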